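/- Functional equation of the local Borcherds product (automorphy factor): for all integers r, s ∈ ℤ and every w ∈ ℂ, Ψ(w + (r + sζ)/m) = e(−s·m·w − s²ζ/2 + sζ/2 + s/2) · Ψ(w). -/

import Mathlib

open Complex

/-- `e(x) = exp(2πix)`. -/
noncomputable def ee (x : ℂ) : ℂ := Complex.exp (2 * Real.pi * Complex.I * x)

/-- The sign `σ(q)`: `1` for `q ≥ 0` and `−1` for `q < 0`. -/
def sgn (q : ℤ) : ℂ := if 0 ≤ q then 1 else -1

/-- The `q`-th member of the local Borcherds product:
`∏_{p=0}^{m−1} (1 − e(σ(q)(w + (p + qζ)/m)))`. -/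
noncomputable def psiTerm (m : ℕ) (ζ : ℂ) (w : ℂ) (q : ℤ) : ℂ :=
  ∏ p ∈ Finset.range m, (1 - ee (sgn q * (w + ((p : ℂ) + (q : ℂ) * ζ) / (m : ℂ))))

/-- The local Borcherds product `Ψ(w)`. -/
noncomputable def Psi (m : ℕ) (ζ : ℂ) (w : ℂ) : ℂ := ∏' q : ℤ, psiTerm m ζ w q

/-! ### basic lemmas on `ee` -/

lemma ee_add (x y : ℂ) : ee (x + y) = ee x * ee y := by
  rw [ee, ee, ee, ← Complex.exp_add]; ring_nf

lemma ee_int (k : ℤ) : ee (k : ℂ) = 1 := by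
  rw [ee, show 2 * (Real.pi:ℂ) * Complex.I * (k:ℂ) = (k:ℂ) * (2 * Real.pi * Complex.I) by ring]
  exact Complex.exp_int_mul_two_pi_mul_I k

lemma ee_ne_zero (x : ℂ) : ee x ≠ 0 := Complex.exp_ne_zero _

lemma ee_mul_ee_neg (x : ℂ) : ee x * ee (-x) = 1 := by
  rw [← ee_add]; simpa using ee_int 0

lemma ee_half : ee (1/2 : ℂ) = -1 := by
  rw [ee, show 2 * (Real.pi:ℂ) * Complex.I * (1/2) = Real.pi * Complex.I by ring]
  exact Complex.exp_pi_mul_I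

lemma norm_ee (z : ℂ) : ‖ee z‖ = Real.exp (-(2 * Real.pi * z.im)) := by
  rw [ee, Complex.norm_exp]
  congr 1
  simp [Complex.mul_re, Complex.mul_im]

lemma sgn_cases (q : ℤ) : sgn q = 1 ∨ sgn q = -1 := by
  unfold sgn; split <;> simp

lemma one_sub_ee_neg (x : ℂ) : 1 - ee (-x) = (-ee (-x)) * (1 - ee x) := by
  have h := ee_mul_ee_neg x
  have : ee (-x) * ee x = 1 := by rw [mul_comm]; exact h
  linear_combination -this

/-! ### periodic product shifting -/

lemma prod_range_zmod {M : Type*} [CommMonoid M] (m : ℕ) [NeZero m] (G : ZMod m → M) :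
    ∏ p ∈ Finset.range m, G (p : ZMod m) = ∏ z : ZMod m, G z := by
  refine Finset.prod_nbij' (fun p => (p : ZMod m)) (fun z => z.val) ?_ ?_ ?_ ?_ ?_
  · intro a _; exact Finset.mem_univ _
  · intro z _; exact Finset.mem_range.mpr (ZMod.val_lt z)
  · intro a ha; exact ZMod.val_natCast_of_lt (Finset.mem_range.mp ha)
  · intro z _; exact ZMod.natCast_rightInverse z
  · intro a _; rfl

lemma prod_range_shift {M : Type*} [CommMonoid M] {m : ℕ} (hm : 1 ≤ m) (f : ℤ → M)
    (hf : ∀ t : ℤ, f (t + m) = f t) (r : ℤ) :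
    ∏ p ∈ Finset.range m, f ((p : ℤ) + r) = ∏ p ∈ Finset.range m, f (p : ℤ) := by
  haveI : NeZero m := ⟨by omega⟩
  have hper : ∀ (k : ℤ) (t : ℤ), f (t + m * k) = f t := by
    intro k
    induction k using Int.induction_on with
    | zero => simp
    | succ k ih => intro t; rw [show t + (m:ℤ) * (k+1) = (t + m * k) + m by ring, hf, ih]
    | pred k ih =>
        intro t
        have h1 := hf (t + (m:ℤ) * (-(k:ℤ)-1))
        rw [show t + (m:ℤ) * (-(k:ℤ)-1) + m = t + m * (-(k:ℤ)) by ring] at h1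
        calc f (t + (m:ℤ) * (-(k:ℤ)-1)) = f (t + (m:ℤ) * (-(k:ℤ))) := h1.symm
          _ = f t := ih t
  have key : ∀ a b : ℤ, ((a : ZMod m) = (b : ZMod m)) → f a = f b := by
    intro a b hab
    obtain ⟨k, hk⟩ := ((ZMod.intCast_eq_intCast_iff _ _ _).mp hab).dvd
    have hb : b = a + (m:ℤ) * k := by omega
    rw [hb, hper]
  set F : ZMod m → M := fun z => f (z.val : ℤ) with hF
  have key2 : ∀ t : ℤ, f t = F (t : ZMod m) := by
    intro t
    have : (((t : ZMod m).val : ℤ) : ZMod m) = (t : ZMod m) := by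
      push_cast
      exact ZMod.natCast_rightInverse _
    exact key t _ this.symm
  calc ∏ p ∈ Finset.range m, f ((p:ℤ) + r)
      = ∏ p ∈ Finset.range m, F ((p : ZMod m) + (r : ZMod m)) := by
        refine Finset.prod_congr rfl fun p _ => ?_
        rw [key2]; congr 1; push_cast; ring
    _ = ∏ z : ZMod m, F (z + (r : ZMod m)) := prod_range_zmod m (fun z => F (z + (r : ZMod m)))
    _ = ∏ z : ZMod m, F z := Equiv.prod_comp (Equiv.addRight (r : ZMod m)) F
    _ = ∏ p ∈ Finset.range m, f (p:ℤ) := by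
        rw [← prod_range_zmod m F]
        refine Finset.prod_congr rfl fun p _ => ?_
        rw [key2 ((p:ℕ):ℤ)]
        norm_cast

/-! ### multipliability -/

lemma im_aux (m : ℕ) (ζ w : ℂ) (p : ℕ) (q : ℤ) :
    (w + ((p:ℂ) + (q:ℂ)*ζ)/(m:ℂ)).im = w.im + q * ζ.im / m := by
  rw [Complex.add_im]
  congr 1
  rw [show ((p:ℂ) + (q:ℂ)*ζ) / (m:ℂ) = ((p:ℂ) + (q:ℂ)*ζ) / ((m:ℝ):ℂ) by norm_cast,
      Complex.div_ofReal_im]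
  simp [Complex.add_im, Complex.mul_im]

lemma norm_u_le (m : ℕ) (ζ : ℂ) (w : ℂ) (p : ℕ) (q : ℤ) :
    ‖ee (sgn q * (w + ((p:ℂ)+(q:ℂ)*ζ)/(m:ℂ)))‖ ≤
      Real.exp (2*Real.pi*|w.im|) * Real.exp (-(2*Real.pi*ζ.im/m)) ^ q.natAbs := by
  rw [← Real.exp_nat_mul, ← Real.exp_add]
  by_cases h : 0 ≤ q
  · rw [sgn, if_pos h, one_mul, norm_ee, im_aux, Real.exp_le_exp]
    have hq : (q.natAbs : ℝ) = (q:ℝ) := by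
      rw [Nat.cast_natAbs]; rw [abs_of_nonneg h]
    rw [hq]
    have h1 : -w.im ≤ |w.im| := by cases abs_cases w.im <;> linarith
    have h2 := mul_le_mul_of_nonneg_left h1 Real.two_pi_pos.le
    rw [div_eq_mul_inv]
    ring_nf
    nlinarith [h2]
  · rw [sgn, if_neg h, neg_one_mul, norm_ee, Complex.neg_im, im_aux, Real.exp_le_exp]
    have hq : (q.natAbs : ℝ) = -(q:ℝ) := by
      rw [Nat.cast_natAbs]; rw [abs_of_neg (not_le.mp h)]; push_cast; ring
    rw [hq]
    have h1 : w.im ≤ |w.im| := le_abs_self _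
    have h2 := mul_le_mul_of_nonneg_left h1 Real.two_pi_pos.le
    rw [div_eq_mul_inv]
    ring_nf
    nlinarith [h2]

lemma summable_norm_u (m : ℕ) (hm : 1 ≤ m) (ζ : ℂ) (hζ : 0 < ζ.im) (w : ℂ) (p : ℕ) :
    Summable (fun q : ℤ => ‖ee (sgn q * (w + ((p:ℂ)+(q:ℂ)*ζ)/(m:ℂ)))‖) := by
  have hm0 : (0:ℝ) < m := by exact_mod_cast hm
  set C := Real.exp (2*Real.pi*|w.im|) with hC
  set r := Real.exp (-(2*Real.pi*ζ.im/m)) with hr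
  have hr0 : 0 ≤ r := Real.exp_nonneg _
  have hr1 : r < 1 := by
    rw [hr, Real.exp_lt_one_iff, neg_lt_zero]
    positivity
  have hgeom : Summable (fun n : ℕ => C * r ^ n) :=
    (summable_geometric_of_lt_one hr0 hr1).mul_left C
  apply Summable.of_nat_of_neg
  · refine Summable.of_nonneg_of_le (fun n => norm_nonneg _) (fun n => ?_) hgeom
    simpa using norm_u_le m ζ w p (n:ℤ)
  · refine Summable.of_nonneg_of_le (fun n => norm_nonneg _) (fun n => ?_) hgeom
    simpa using norm_u_le m ζ w p (-(n:ℤ))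

lemma multipliable_factor (m : ℕ) (hm : 1 ≤ m) (ζ : ℂ) (hζ : 0 < ζ.im) (w : ℂ) (p : ℕ) :
    Multipliable (fun q : ℤ => 1 - ee (sgn q * (w + ((p:ℂ)+(q:ℂ)*ζ)/(m:ℂ)))) := by
  set u : ℤ → ℂ := fun q => ee (sgn q * (w + ((p:ℂ)+(q:ℂ)*ζ)/(m:ℂ))) with hu
  have hsum : Summable (fun q : ℤ => ‖u q‖) := summable_norm_u m hm ζ hζ w p
  by_cases hz : ∃ q0 : ℤ, (1:ℂ) - u q0 = 0
  · obtain ⟨q0, hq0⟩ := hz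
    refine ⟨0, ?_⟩
    rw [HasProd]
    have : ∀ᶠ F : Finset ℤ in Filter.atTop, (∏ q ∈ F, ((1:ℂ) - u q)) = 0 := by
      filter_upwards [Filter.eventually_ge_atTop ({q0} : Finset ℤ)] with F hF
      exact Finset.prod_eq_zero (hF (Finset.mem_singleton_self q0)) hq0
    exact Filter.Tendsto.congr' (Filter.EventuallyEq.symm this) tendsto_const_nhds
  · push_neg at hz
    have := Complex.multipliable_of_summable_log (f := fun q => (1:ℂ) - u q) ?_
    · exact this
    refine Summable.of_norm_bounded_eventually (g := fun q => 3/2 * ‖u q‖) (hsum.mul_left _) ?_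
    have hev : ∀ᶠ q in Filter.cofinite, ‖u q‖ ≤ 1/2 := by
      have ht := hsum.tendsto_cofinite_zero
      exact ht.eventually (by filter_upwards [eventually_le_nhds (by norm_num : (0:ℝ) < 1/2)] with x hx using hx)
    filter_upwards [hev] with q hq
    have : (1:ℂ) - u q = 1 + (-u q) := by ring
    rw [this]
    have := Complex.norm_log_one_add_half_le_self (z := -u q) (by simpa using hq)
    simpa using this

lemma multipliable_psiTerm (m : ℕ) (hm : 1 ≤ m) (ζ : ℂ) (hζ : 0 < ζ.im) (w : ℂ) :
    Multipliable (psiTerm m ζ w) := by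
  have : Multipliable (fun q : ℤ => ∏ p ∈ Finset.range m,
      (1 - ee (sgn q * (w + ((p:ℂ)+(q:ℂ)*ζ)/(m:ℂ))))) :=
    multipliable_prod (fun p _ => multipliable_factor m hm ζ hζ w p)
  exact this.congr (fun q => rfl)

/-! ### finite product computations -/

lemma ee_sgn_one (q : ℤ) : ee (sgn q) = 1 := by
  rcases sgn_cases q with h | h <;> rw [h]
  · simpa using ee_int 1
  · simpa using ee_int (-1)

lemma ee_sum {ι : Type*} (t : Finset ι) (g : ι → ℂ) :
    ee (∑ i ∈ t, g i) = ∏ i ∈ t, ee (g i) := by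
  classical
  induction t using Finset.cons_induction with
  | empty => simp [ee]
  | cons a t ha ih => rw [Finset.sum_cons, Finset.prod_cons, ee_add, ih]

lemma neg_ee_neg (x : ℂ) : -ee (-x) = ee (1/2 - x) := by
  rw [show (1/2 - x : ℂ) = 1/2 + -x by ring, ee_add, ee_half]; ring

lemma sum_range_cast (n : ℕ) : ∑ p ∈ Finset.range n, (p : ℂ) = n * (n - 1) / 2 := by
  induction n with
  | zero => simp
  | succ k ih => rw [Finset.sum_range_succ, ih]; push_cast; ring

lemma ico_int_map (n : ℕ) :
    Finset.Ico (0:ℤ) (n:ℤ)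
      = (Finset.range n).map ⟨(fun k : ℕ => (k:ℤ)), fun a b h => by simpa using h⟩ := by
  ext q
  simp only [Finset.mem_Ico, Finset.mem_map, Finset.mem_range, Function.Embedding.coeFn_mk]
  constructor
  · rintro ⟨h0, hn⟩; exact ⟨q.toNat, by omega, by show ((q.toNat : ℕ) : ℤ) = q; omega⟩
  · rintro ⟨k, hk, rfl⟩; show 0 ≤ ((k:ℕ):ℤ) ∧ ((k:ℕ):ℤ) < n; omega

lemma prod_c_eq (m : ℕ) (hm : 1 ≤ m) (ζ w : ℂ) (s : ℕ) :
    ∏ k ∈ Finset.range s, ∏ p ∈ Finset.range m, (-ee (-(w + ((p:ℂ) + (k:ℂ)*ζ)/(m:ℂ))))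
      = ee (-(s:ℂ)*(m:ℂ)*w - (s:ℂ)^2*ζ/2 + (s:ℂ)*ζ/2 + (s:ℂ)/2) := by
  have hm0 : (m:ℂ) ≠ 0 := Nat.cast_ne_zero.mpr (by omega)
  have hin : ∀ k : ℕ, ∑ p ∈ Finset.range m, ((1:ℂ)/2 - (w + ((p:ℂ)+(k:ℂ)*ζ)/(m:ℂ)))
      = (m:ℂ)*(1/2 - w) - ((m:ℂ)-1)/2 - (k:ℂ)*ζ := by
    intro k
    have h1 : ∀ p : ℕ, (1:ℂ)/2 - (w + ((p:ℂ)+(k:ℂ)*ζ)/(m:ℂ))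
        = ((1:ℂ)/2 - w - (k:ℂ)*ζ/(m:ℂ)) - (p:ℂ) * (1/(m:ℂ)) := by
      intro p; field_simp; ring
    rw [Finset.sum_congr rfl fun p _ => h1 p, Finset.sum_sub_distrib, Finset.sum_const,
      Finset.card_range, ← Finset.sum_mul, sum_range_cast, nsmul_eq_mul]
    field_simp
    ring
  have step1 : ∀ k : ℕ, ∏ p ∈ Finset.range m, (-ee (-(w + ((p:ℂ) + (k:ℂ)*ζ)/(m:ℂ))))
      = ee (∑ p ∈ Finset.range m, ((1:ℂ)/2 - (w + ((p:ℂ)+(k:ℂ)*ζ)/(m:ℂ)))) := by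
    intro k
    rw [ee_sum]
    exact Finset.prod_congr rfl fun p _ => neg_ee_neg _
  calc ∏ k ∈ Finset.range s, ∏ p ∈ Finset.range m, (-ee (-(w + ((p:ℂ) + (k:ℂ)*ζ)/(m:ℂ))))
      = ∏ k ∈ Finset.range s, ee ((m:ℂ)*(1/2 - w) - ((m:ℂ)-1)/2 - (k:ℂ)*ζ) := by
        exact Finset.prod_congr rfl fun k _ => by rw [step1 k, hin k]
    _ = ee (∑ k ∈ Finset.range s, ((m:ℂ)*(1/2 - w) - ((m:ℂ)-1)/2 - (k:ℂ)*ζ)) := (ee_sum _ _).symm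
    _ = ee (-(s:ℂ)*(m:ℂ)*w - (s:ℂ)^2*ζ/2 + (s:ℂ)*ζ/2 + (s:ℂ)/2) := by
        congr 1
        rw [Finset.sum_sub_distrib, Finset.sum_const, Finset.card_range, ← Finset.sum_mul,
          sum_range_cast, nsmul_eq_mul]
        ring

/-! ### the core case `s ∈ ℕ` -/

lemma core (m : ℕ) (hm : 1 ≤ m) (ζ : ℂ) (hζ : 0 < ζ.im) (r : ℤ) (s : ℕ) (w : ℂ) :
    Psi m ζ (w + ((r:ℂ) + (s:ℂ)*ζ)/(m:ℂ))
      = ee (-(s:ℂ)*(m:ℂ)*w - (s:ℂ)^2*ζ/2 + (s:ℂ)*ζ/2 + (s:ℂ)/2) * Psi m ζ w := by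
  classical
  have hm0 : (m:ℂ) ≠ 0 := Nat.cast_ne_zero.mpr (by omega)
  set c : ℤ → ℂ := fun q => if 0 ≤ q ∧ q < (s:ℤ) then
      ∏ p ∈ Finset.range m, (-ee (-(w + ((p:ℂ) + (q:ℂ)*ζ)/(m:ℂ)))) else 1 with hc
  have hpoint : ∀ q : ℤ, psiTerm m ζ (w + ((r:ℂ) + (s:ℂ)*ζ)/(m:ℂ)) (q - (s:ℤ))
      = c q * psiTerm m ζ w q := by
    intro q
    set ε := sgn (q - (s:ℤ)) with hε
    have hεe : ee ε = 1 := ee_sgn_one _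
    set f : ℤ → ℂ := fun t => 1 - ee (ε * (w + ((t:ℂ) + (q:ℂ)*ζ)/(m:ℂ))) with hfdef
    have hper : ∀ t : ℤ, f (t + (m:ℤ)) = f t := by
      intro t
      rw [hfdef]
      simp only
      have harg : ε * (w + (((t + (m:ℤ) : ℤ):ℂ) + (q:ℂ)*ζ)/(m:ℂ))
          = ε * (w + ((t:ℂ) + (q:ℂ)*ζ)/(m:ℂ)) + ε := by
        push_cast
        field_simp
        ring
      rw [harg, ee_add, hεe, mul_one]
    have hstep1 : psiTerm m ζ (w + ((r:ℂ) + (s:ℂ)*ζ)/(m:ℂ)) (q - (s:ℤ))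
        = ∏ p ∈ Finset.range m, f ((p:ℤ) + r) := by
      unfold psiTerm
      refine Finset.prod_congr rfl fun p _ => ?_
      rw [hfdef]
      simp only
      refine congrArg (fun z => 1 - ee (ε * z)) ?_
      push_cast
      field_simp
      ring
    have hstep2 := prod_range_shift hm f hper r
    rw [hstep1, hstep2]
    by_cases hq : 0 ≤ q ∧ q < (s:ℤ)
    · have h1 : ε = -1 := by rw [hε, sgn, if_neg (by omega)]
      have h2 : sgn q = 1 := by rw [sgn, if_pos hq.1]
      rw [hc]
      simp only [if_pos hq]
      unfold psiTerm
      rw [← Finset.prod_mul_distrib]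
      refine Finset.prod_congr rfl fun p _ => ?_
      rw [hfdef]
      simp only
      rw [h1, h2, neg_one_mul, one_mul]
      exact one_sub_ee_neg _
    · have h1 : ε = sgn q := by rw [hε, sgn, sgn]; exact if_congr (by omega) rfl rfl
      rw [hc]
      simp only [if_neg hq, one_mul]
      unfold psiTerm
      refine Finset.prod_congr rfl fun p _ => ?_
      rw [hfdef]
      simp only [h1]
      norm_cast
  have hmulc : Multipliable c :=
    multipliable_of_ne_finset_one (s := Finset.Ico (0:ℤ) (s:ℤ))
      (fun q hq => by rw [hc]; exact if_neg (by simpa [Finset.mem_Ico] using hq))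
  have hmulf := multipliable_psiTerm m hm ζ hζ w
  have htpc : ∏' q : ℤ, c q
      = ee (-(s:ℂ)*(m:ℂ)*w - (s:ℂ)^2*ζ/2 + (s:ℂ)*ζ/2 + (s:ℂ)/2) := by
    rw [tprod_eq_prod (s := Finset.Ico (0:ℤ) (s:ℤ))
      (fun q hq => by rw [hc]; exact if_neg (by simpa [Finset.mem_Ico] using hq))]
    rw [ico_int_map, Finset.prod_map]
    rw [← prod_c_eq m hm ζ w s]
    refine Finset.prod_congr rfl fun k hk => ?_
    simp only [Function.Embedding.coeFn_mk, hc]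
    rw [if_pos ⟨Int.natCast_nonneg k, by show ((k:ℕ):ℤ) < s; exact_mod_cast Finset.mem_range.mp hk⟩]
    refine Finset.prod_congr rfl fun p _ => ?_
    norm_cast
  calc Psi m ζ (w + ((r:ℂ) + (s:ℂ)*ζ)/(m:ℂ))
      = ∏' q : ℤ, psiTerm m ζ (w + ((r:ℂ) + (s:ℂ)*ζ)/(m:ℂ)) (q - (s:ℤ)) := by
        rw [Psi, ← Equiv.tprod_eq (Equiv.subRight (s:ℤ))
          (psiTerm m ζ (w + ((r:ℂ) + (s:ℂ)*ζ)/(m:ℂ)))]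
        rfl
    _ = ∏' q : ℤ, (c q * psiTerm m ζ w q) := tprod_congr hpoint
    _ = (∏' q : ℤ, c q) * (∏' q : ℤ, psiTerm m ζ w q) := hmulc.tprod_mul hmulf
    _ = ee (-(s:ℂ)*(m:ℂ)*w - (s:ℂ)^2*ζ/2 + (s:ℂ)*ζ/2 + (s:ℂ)/2) * Psi m ζ w := by
        rw [htpc, Psi]


/-- Functional equation of the local Borcherds product (automorphy factor):
`Ψ(w + (r + sζ)/m) = e(−s·m·w − s²ζ/2 + sζ/2 + s/2)·Ψ(w)`. -/
theorem localBorcherds_functional_equation (m : ℕ) (hm : 1 ≤ m) (ζ : ℂ)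
    (hζ : 0 < ζ.im) (r s : ℤ) (w : ℂ) :
    Psi m ζ (w + ((r : ℂ) + (s : ℂ) * ζ) / (m : ℂ))
      = ee (-(s : ℂ) * (m : ℂ) * w - (s : ℂ) ^ 2 * ζ / 2 + (s : ℂ) * ζ / 2 + (s : ℂ) / 2)
          * Psi m ζ w := by
  have hm0 : (m:ℂ) ≠ 0 := Nat.cast_ne_zero.mpr (by omega)
  rcases le_or_gt 0 s with hs | hs
  · lift s to ℕ using hs with n
    have := core m hm ζ hζ r n w
    push_cast
    push_cast at this
    exact this
  · -- apply core with -s ≥ 0 at shifted point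
    obtain ⟨n, hn⟩ : ∃ n : ℕ, (n:ℤ) = -s := ⟨(-s).toNat, by omega⟩
    have key := core m hm ζ hζ (-r) n (w + ((r : ℂ) + (s : ℂ) * ζ) / (m : ℂ))
    have hncast : (n:ℂ) = -(s:ℂ) := by exact_mod_cast congrArg (fun z : ℤ => (z:ℂ)) hn
    rw [hncast] at key
    have harg : w + ((r : ℂ) + (s : ℂ) * ζ) / (m : ℂ) + (((-r:ℤ):ℂ) + -(s:ℂ) * ζ) / (m:ℂ) = w := by
      push_cast
      field_simp
      ring
    rw [harg] at key
    -- key : Psi w = ee E' * Psi (w + δ)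
    set E' := -(-(s:ℂ)) * (m:ℂ) * (w + ((r : ℂ) + (s : ℂ) * ζ) / (m : ℂ))
      - (-(s:ℂ))^2 * ζ/2 + (-(s:ℂ)) * ζ/2 + (-(s:ℂ))/2 with hE'
    have hEsum : ee (-(s : ℂ) * (m : ℂ) * w - (s : ℂ) ^ 2 * ζ / 2 + (s : ℂ) * ζ / 2 + (s : ℂ) / 2)
        * ee E' = 1 := by
      rw [← ee_add]
      have : (-(s : ℂ) * (m : ℂ) * w - (s : ℂ) ^ 2 * ζ / 2 + (s : ℂ) * ζ / 2 + (s : ℂ) / 2) + E'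
          = ((s * r : ℤ) : ℂ) := by
        have hdm : ((r:ℂ) + (s:ℂ)*ζ)/(m:ℂ) * (m:ℂ) = (r:ℂ) + (s:ℂ)*ζ :=
          div_mul_cancel₀ _ hm0
        rw [hE']
        push_cast
        linear_combination (s:ℂ) * hdm
      rw [this, ee_int]
    rw [key, ← mul_assoc, hEsum, one_mul]
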